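/- arXiv:1301.2678 — 2 statements merged into one kernel-verified Lean document; each statement's English description precedes it below -/
import Mathlib

section
/- Let P be an AC-MAS and let P_b be its b-restriction, for b ∈ ℕ with b ≥ |adom(s0) ∪ C|. Then for every FO-ECTLK formula φ, if P_b ⊨ φ then P ⊨ φ. -/
/-!  Common formalisation of artifact-centric multi-agent systems (AC-MAS). -/

open Set

/-- A database schema: a finite type of relation symbols, each with an arity. -/
structure Schema : Type 1 where
  Rel : Type
  [relFin : Fintype Rel]
  arity : Rel → ℕ

attribute [instance] Schema.relFin

/-- A `D`-instance over an interpretation domain `U`: every relation symbol is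
interpreted as a finite set of tuples over `U`. -/
structure Inst (D : Schema) (U : Type) : Type where
  rel : ∀ r : D.Rel, Set (Fin (D.arity r) → U)
  finite : ∀ r, (rel r).Finite

/-- The active domain of an instance. -/
def Inst.adom {D : Schema} {U : Type} (I : Inst D U) : Set U :=
  { u | ∃ (r : D.Rel) (t : Fin (D.arity r) → U), t ∈ I.rel r ∧ ∃ j, t j = u }

/-- The schema `D` together with a primed copy of every relation symbol. -/
def Schema.double (D : Schema) : Schema where
  Rel := D.Rel ⊕ D.Rel
  relFin := inferInstance
  arity := Sum.elim D.arity D.arity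

/-- The disjunctive join `I ⊕ J`: unprimed symbols are interpreted as in `I`,
primed symbols as in `J`. -/
def Inst.oplus {D : Schema} {U : Type} (I J : Inst D U) : Inst D.double U where
  rel := fun r => match r with
    | .inl r₀ => I.rel r₀
    | .inr r₀ => J.rel r₀
  finite := fun r => by
    cases r with
    | inl r₀ => exact I.finite r₀
    | inr r₀ => exact J.finite r₀

/-- Image of an instance under a map of domains. -/
def Inst.map {D : Schema} {C U : Type} (f : C → U) (I : Inst D C) : Inst D U where
  rel := fun r => (fun t => f ∘ t) '' I.rel r
  finite := fun r => (I.finite r).image _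

/-! ### First-order formulas -/

/-- Terms: variables (natural numbers) or constants from `C`. -/
abbrev Term (C : Type) := ℕ ⊕ C

def Term.varsF {C : Type} : Term C → Finset ℕ
  | .inl x => {x}
  | .inr _ => ∅

def Term.constsS {C : Type} : Term C → Set C
  | .inl _ => ∅
  | .inr c => {c}

def Term.val {C U : Type} (cst : C → U) (σ : ℕ → U) : Term C → U
  | .inl x => σ x
  | .inr c => cst c

/-- First-order formulas over schema `D`, with equality, constants from `C`
and no function symbols. -/
inductive FO (D : Schema) (C : Type) : Type where
  | eq : Term C → Term C → FO D C
  | rel : (r : D.Rel) → (Fin (D.arity r) → Term C) → FO D C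
  | not : FO D C → FO D C
  | imp : FO D C → FO D C → FO D C
  | all : ℕ → FO D C → FO D C

namespace FO

variable {D : Schema} {C : Type}

/-- Free variables. -/
def free : FO D C → Finset ℕ
  | .eq t₁ t₂ => t₁.varsF ∪ t₂.varsF
  | .rel _ ts => Finset.univ.biUnion fun j => (ts j).varsF
  | .not φ => φ.free
  | .imp φ ψ => φ.free ∪ ψ.free
  | .all x φ => φ.free.erase x

/-- All variables. -/
def vars : FO D C → Finset ℕ
  | .eq t₁ t₂ => t₁.varsF ∪ t₂.varsF
  | .rel _ ts => Finset.univ.biUnion fun j => (ts j).varsF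
  | .not φ => φ.vars
  | .imp φ ψ => φ.vars ∪ ψ.vars
  | .all x φ => insert x φ.vars

/-- Constants mentioned in a formula. -/
def consts : FO D C → Set C
  | .eq t₁ t₂ => t₁.constsS ∪ t₂.constsS
  | .rel _ ts => ⋃ j, (ts j).constsS
  | .not φ => φ.consts
  | .imp φ ψ => φ.consts ∪ ψ.consts
  | .all _ φ => φ.consts

/-- The formula mentions only relation symbols from `R`. -/
def UsesOnly (R : Set D.Rel) : FO D C → Prop
  | .eq _ _ => True
  | .rel r _ => r ∈ R
  | .not φ => φ.UsesOnly R
  | .imp φ ψ => φ.UsesOnly R ∧ ψ.UsesOnly R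
  | .all _ φ => φ.UsesOnly R

/-- Satisfaction of FO-formulas, with active-domain quantification. -/
def sat {U : Type} (cst : C → U) (I : Inst D U) : (ℕ → U) → FO D C → Prop
  | σ, .eq t₁ t₂ => t₁.val cst σ = t₂.val cst σ
  | σ, .rel r ts => (fun j => (ts j).val cst σ) ∈ I.rel r
  | σ, .not φ => ¬ sat cst I σ φ
  | σ, .imp φ ψ => sat cst I σ φ → sat cst I σ ψ
  | σ, .all x φ => ∀ u ∈ I.adom, sat cst I (Function.update σ x u) φ

end FO

/-! ### Agents and AC-MAS -/

/-- The signature of an agent: a finite set of action types with parameter counts. -/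
structure AgentSig : Type 1 where
  Act : Type
  [actFin : Fintype Act]
  np : Act → ℕ

attribute [instance] AgentSig.actFin

/-- A ground action: an action type together with ground parameters. -/
def GAct (g : AgentSig) (U : Type) : Type := Σ a : g.Act, Fin (g.np a) → U

/-- Renaming of ground-action parameters. -/
def GAct.map {g : AgentSig} {U U' : Type} (f : U → U') : GAct g U → GAct g U'
  | ⟨a, u⟩ => ⟨a, fun j => f (u j)⟩

/-- An agent: local states structured as database instances, and a protocol. -/
structure Agent (D : Schema) (g : AgentSig) (U : Type) : Type where
  L : Set (Inst D U)
  Pr : Inst D U → Set (GAct g U)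

/-- A global state: one local database instance per agent `0, …, n`
(agent `0` is the environment). -/
abbrev GState (D : Schema) (n : ℕ) (U : Type) := Fin (n+1) → Inst D U

/-- A joint (global) ground action. -/
abbrev JAct {n : ℕ} (sig : Fin (n+1) → AgentSig) (U : Type) : Type := ∀ i, GAct (sig i) U

def JAct.map {n : ℕ} {sig : Fin (n+1) → AgentSig} {U U' : Type} (f : U → U')
    (a : JAct sig U) : JAct sig U' := fun i => (a i).map f

/-- The set of individuals occurring as parameters of a joint ground action. -/
def actElems {n : ℕ} {sig : Fin (n+1) → AgentSig} {U : Type} (a : JAct sig U) : Set U :=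
  { u | ∃ (i : Fin (n+1)) (j : Fin ((sig i).np (a i).1)), (a i).2 j = u }

/-- Active domain of a family of instances (e.g. a global state). -/
def adomF {D : Schema} {X U : Type} (s : X → Inst D U) : Set U := ⋃ i, (s i).adom

/-- The global instance `D_s` associated with a global state. -/
def gInst {D : Schema} {n : ℕ} {U : Type} (s : GState D n U) : Inst D U where
  rel := fun r => ⋃ i, (s i).rel r
  finite := fun r => Set.finite_iUnion fun i => (s i).finite r

/-- Componentwise disjunctive join of two global states. -/
def oplusG {D : Schema} {n : ℕ} {U : Type} (s t : GState D n U) : GState D.double n U :=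
  fun i => (s i).oplus (t i)

/-- An artifact-centric multi-agent system. -/
structure ACMAS (D : Schema) {n : ℕ} (sig : Fin (n+1) → AgentSig) {U : Type}
    (Ag : ∀ i, Agent D (sig i) U) : Type where
  /-- set of (reachable) global states -/
  S : Set (GState D n U)
  /-- initial global state -/
  s0 : GState D n U
  s0_mem : s0 ∈ S
  states_local : ∀ s ∈ S, ∀ i, s i ∈ (Ag i).L
  /-- global transition function -/
  τ : GState D n U → JAct sig U → Set (GState D n U)
  /-- `τ` is defined only on protocol-enabled joint actions -/
  tau_enabled : ∀ s a, (τ s a).Nonempty → ∀ i, a i ∈ (Ag i).Pr (s i)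
  tau_closed : ∀ s ∈ S, ∀ a, τ s a ⊆ S

namespace ACMAS

variable {D : Schema} {n : ℕ} {sig : Fin (n+1) → AgentSig} {U : Type}
  {Ag : ∀ i, Agent D (sig i) U}

/-- The transition relation `s → t`. -/
def Tr (M : ACMAS D sig Ag) (s t : GState D n U) : Prop := ∃ a, t ∈ M.τ s a

/-- Epistemic indistinguishability for agent `i`. -/
def Epi (M : ACMAS D sig Ag) (i : Fin (n+1)) (s t : GState D n U) : Prop :=
  s ∈ M.S ∧ t ∈ M.S ∧ s i = t i

/-- Union of the epistemic relations of agents `1, …, n`. -/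
def EpiAny (M : ACMAS D sig Ag) (s t : GState D n U) : Prop :=
  ∃ i : Fin n, M.Epi i.succ s t

/-- The standard assumptions: the transition relation is serial and `S` is
exactly the set of states reachable from `s0`. -/
def Std (M : ACMAS D sig Ag) : Prop :=
  (∀ s ∈ M.S, ∃ t, M.Tr s t) ∧ M.S = { s | Relation.ReflTransGen M.Tr M.s0 s }

/-- An (infinite) run. -/
def IsRun (M : ACMAS D sig Ag) (r : ℕ → GState D n U) : Prop :=
  (∀ k, r k ∈ M.S) ∧ ∀ k, M.Tr (r k) (r (k+1))

/-- A temporal-epistemic run. -/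
def IsTERun (M : ACMAS D sig Ag) (r : ℕ → GState D n U) : Prop :=
  (∀ k, r k ∈ M.S) ∧ ∀ k, M.Tr (r k) (r (k+1)) ∨ M.EpiAny (r k) (r (k+1))

end ACMAS

/-! ### Isomorphisms and equivalent assignments -/

/-- `ι` is a witness for the isomorphism of the families `s` and `s'`:
a constant-preserving bijection between the active domains extended with the
constants, preserving all relations componentwise. -/
def IsWitness {D : Schema} {X C U U' : Type} (cst : C → U) (cst' : C → U')
    (ι : U → U') (s : X → Inst D U) (s' : X → Inst D U') : Prop :=
  Set.BijOn ι (adomF s ∪ Set.range cst) (adomF s' ∪ Set.range cst') ∧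
  (∀ c, ι (cst c) = cst' c) ∧
  ∀ (i : X) (r : D.Rel) (t : Fin (D.arity r) → U),
    (∀ j, t j ∈ adomF s ∪ Set.range cst) →
    (t ∈ (s i).rel r ↔ (fun j => ι (t j)) ∈ (s' i).rel r)

/-- Isomorphism of families of instances (in particular global states). -/
def Iso {D : Schema} {X C U U' : Type} (cst : C → U) (cst' : C → U')
    (s : X → Inst D U) (s' : X → Inst D U') : Prop :=
  ∃ ι, IsWitness cst cst' ι s s'

/-- Equivalent assignments for a set `V` of variables w.r.t. `s` and `s'`. -/
def EqAssign {D : Schema} {n : ℕ} {C U U' : Type} (cst : C → U) (cst' : C → U')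
    (V : Set ℕ) (σ : ℕ → U) (σ' : ℕ → U')
    (s : GState D n U) (s' : GState D n U') : Prop :=
  ∃ γ : U → U',
    Set.BijOn γ (adomF s ∪ Set.range cst ∪ σ '' V)
      (adomF s' ∪ Set.range cst' ∪ σ' '' V) ∧
    IsWitness cst cst' γ s s' ∧
    ∀ x ∈ V, σ' x = γ (σ x)

/-! ### Simulations and bisimulations -/

section Bisim

variable {D : Schema} {n : ℕ} {sig sig' : Fin (n+1) → AgentSig} {C U U' : Type}
  {Ag : ∀ i, Agent D (sig i) U} {Ag' : ∀ i, Agent D (sig' i) U'}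

/-- Simulation between two AC-MAS. -/
def IsSim (cst : C → U) (cst' : C → U')
    (M : ACMAS D sig Ag) (M' : ACMAS D sig' Ag')
    (R : GState D n U → GState D n U' → Prop) : Prop :=
  ∀ s s', R s s' →
    s ∈ M.S ∧ s' ∈ M'.S ∧ Iso cst cst' s s' ∧
    ∀ t, M.Tr s t → ∃ t', M'.Tr s' t' ∧ R t t'

/-- Bisimulation. -/
def IsBisim (cst : C → U) (cst' : C → U')
    (M : ACMAS D sig Ag) (M' : ACMAS D sig' Ag')
    (R : GState D n U → GState D n U' → Prop) : Prop :=
  IsSim cst cst' M M' R ∧ IsSim cst' cst M' M (fun s' s => R s s')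

/-- Bisimilarity of states. -/
def Bisimilar (cst : C → U) (cst' : C → U')
    (M : ACMAS D sig Ag) (M' : ACMAS D sig' Ag')
    (s : GState D n U) (s' : GState D n U') : Prop :=
  ∃ R, IsBisim cst cst' M M' R ∧ R s s'

/-- `P ≈ P'`: the two systems are bisimilar. -/
def BisimSys (cst : C → U) (cst' : C → U')
    (M : ACMAS D sig Ag) (M' : ACMAS D sig' Ag') : Prop :=
  Bisimilar cst cst' M M' M.s0 M'.s0

/-- ⊕-simulation. -/
def IsOSim (cst : C → U) (cst' : C → U')
    (M : ACMAS D sig Ag) (M' : ACMAS D sig' Ag')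
    (R : GState D n U → GState D n U' → Prop) : Prop :=
  ∀ s s', R s s' →
    s ∈ M.S ∧ s' ∈ M'.S ∧ Iso cst cst' s s' ∧
    (∀ t, M.Tr s t → ∃ t', M'.Tr s' t' ∧
        Iso cst cst' (oplusG s t) (oplusG s' t') ∧ R t t') ∧
    (∀ (t : GState D n U) (i : Fin n), M.Epi i.succ s t →
        ∃ t', M'.Epi i.succ s' t' ∧
          Iso cst cst' (oplusG s t) (oplusG s' t') ∧ R t t')

/-- ⊕-bisimulation. -/
def IsOBisim (cst : C → U) (cst' : C → U')
    (M : ACMAS D sig Ag) (M' : ACMAS D sig' Ag')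
    (R : GState D n U → GState D n U' → Prop) : Prop :=
  IsOSim cst cst' M M' R ∧ IsOSim cst' cst M' M (fun s' s => R s s')

/-- ⊕-bisimilarity of states. -/
def OBisimilar (cst : C → U) (cst' : C → U')
    (M : ACMAS D sig Ag) (M' : ACMAS D sig' Ag')
    (s : GState D n U) (s' : GState D n U') : Prop :=
  ∃ R, IsOBisim cst cst' M M' R ∧ R s s'

/-- The two systems are ⊕-bisimilar. -/
def OBisimSys (cst : C → U) (cst' : C → U')
    (M : ACMAS D sig Ag) (M' : ACMAS D sig' Ag') : Prop :=
  OBisimilar cst cst' M M' M.s0 M'.s0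

end Bisim

/-! ### Uniformity and boundedness -/

section Uniform

variable {D : Schema} {n : ℕ} {sig : Fin (n+1) → AgentSig} {C U : Type}
  {Ag : ∀ i, Agent D (sig i) U}

/-- Temporal condition (1) of uniformity. -/
def UniformT (cst : C → U) (M : ACMAS D sig Ag) : Prop :=
  ∀ s ∈ M.S, ∀ t ∈ M.S, ∀ s' ∈ M.S, ∀ (t' : GState D n U) (a : JAct sig U),
    t ∈ M.τ s a →
    ∀ ι : U → U, IsWitness cst cst ι (oplusG s t) (oplusG s' t') →
    ∀ ι' : U → U,
      (∀ u ∈ adomF (oplusG s t) ∪ Set.range cst, ι' u = ι u) →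
      Set.InjOn ι' (adomF (oplusG s t) ∪ Set.range cst ∪ actElems a) →
      (∀ c, ι' (cst c) = cst c) →
      t' ∈ M.τ s' (JAct.map ι' a)

/-- Epistemic condition (2) of uniformity. -/
def UniformE (cst : C → U) (M : ACMAS D sig Ag) : Prop :=
  ∀ s ∈ M.S, ∀ t ∈ M.S, ∀ s' ∈ M.S, ∀ (t' : GState D n U) (i : Fin n),
    M.Epi i.succ s t → Iso cst cst (oplusG s t) (oplusG s' t') →
    M.Epi i.succ s' t'

/-- Uniform AC-MAS. -/
def Uniform (cst : C → U) (M : ACMAS D sig Ag) : Prop :=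
  UniformT cst M ∧ UniformE cst M

/-- `b`-bounded AC-MAS: no reachable state has more than `b` distinct elements
in its active domain. -/
def BBounded (M : ACMAS D sig Ag) (b : ℕ) : Prop :=
  ∀ s ∈ M.S, (adomF s).Finite ∧ (adomF s).ncard ≤ b

end Uniform

/-- `N_Ag`: the sum over the agents of the maximal number of parameters of
their action types. -/
def NAg {n : ℕ} (sig : Fin (n+1) → AgentSig) : ℕ :=
  ∑ i, Finset.univ.sup (sig i).np

/-! ### Abstractions -/

section Abstraction

variable {D : Schema} {n : ℕ} {sig : Fin (n+1) → AgentSig} {C U U' : Type}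
  {Ag : ∀ i, Agent D (sig i) U} {Ag' : ∀ i, Agent D (sig i) U'}

/-- `A'` is the abstract agent corresponding to `A`, over the domain `U'`. -/
def IsAbstractAgent {g : AgentSig} (cst : C → U) (cst' : C → U')
    (A : Agent D g U) (A' : Agent D g U') : Prop :=
  ∀ (l' : Inst D U') (α' : GAct g U'), α' ∈ A'.Pr l' ↔
    ∃ l ∈ A.L, ∃ α ∈ A.Pr l, ∃ ι : U → U',
      IsWitness cst cst' ι (fun _ : PUnit => l) (fun _ : PUnit => l') ∧
      ∃ ι' : U → U',
        (∀ u ∈ l.adom ∪ Set.range cst, ι' u = ι u) ∧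
        Set.InjOn ι' (l.adom ∪ Set.range cst ∪ Set.range α.2) ∧
        α' = α.map ι'

/-- `M'` is an abstraction of `M` (over the abstract agents `Ag'`). -/
def IsAbstraction (cst : C → U) (cst' : C → U')
    (M : ACMAS D sig Ag) (M' : ACMAS D sig Ag') : Prop :=
  (∀ i, IsAbstractAgent cst cst' (Ag i) (Ag' i)) ∧
  Iso cst' cst M'.s0 M.s0 ∧
  ∀ (s' t' : GState D n U') (a' : JAct sig U'),
    t' ∈ M'.τ s' a' ↔
      ∃ s ∈ M.S, ∃ t ∈ M.S, ∃ a : JAct sig U, t ∈ M.τ s a ∧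
        ∃ ι : U → U', IsWitness cst cst' ι s s' ∧ IsWitness cst cst' ι t t' ∧
          ∃ ι' : U → U',
            (∀ u ∈ adomF s ∪ adomF t ∪ Set.range cst, ι' u = ι u) ∧
            Set.InjOn ι' (adomF s ∪ adomF t ∪ Set.range cst ∪ actElems a) ∧
            a' = JAct.map ι' a

/-- `M'` is a ⊕-abstraction of `M` (over the abstract agents `Ag'`).
The requirement `s0' = s0` is rendered, across the two interpretation
domains, as: the initial states are isomorphic and `adom(s0) ⊆ C`. -/
def IsOAbstraction (cst : C → U) (cst' : C → U')
    (M : ACMAS D sig Ag) (M' : ACMAS D sig Ag') : Prop :=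
  (∀ i, IsAbstractAgent cst cst' (Ag i) (Ag' i)) ∧
  (Iso cst cst' M.s0 M'.s0 ∧ adomF M.s0 ⊆ Set.range cst) ∧
  ∀ (s' t' : GState D n U') (a' : JAct sig U'),
    t' ∈ M'.τ s' a' ↔
      ∃ s ∈ M.S, ∃ t ∈ M.S, ∃ a : JAct sig U, t ∈ M.τ s a ∧
        ∃ ι : U → U',
          IsWitness cst cst' ι (oplusG s t) (oplusG s' t') ∧
          ∃ ι' : U → U',
            (∀ u ∈ adomF (oplusG s t) ∪ Set.range cst, ι' u = ι u) ∧
            Set.InjOn ι' (adomF (oplusG s t) ∪ Set.range cst ∪ actElems a) ∧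
            a' = JAct.map ι' a

end Abstraction

/-! ### Temporal-epistemic specification languages -/

/-- Sentence-atomic FO-CTL formulas. -/
inductive SAFOCTL (D : Schema) (C : Type) : Type where
  | atom : (ψ : FO D C) → ψ.free = ∅ → SAFOCTL D C
  | not : SAFOCTL D C → SAFOCTL D C
  | imp : SAFOCTL D C → SAFOCTL D C → SAFOCTL D C
  | ax : SAFOCTL D C → SAFOCTL D C
  | au : SAFOCTL D C → SAFOCTL D C → SAFOCTL D C
  | eu : SAFOCTL D C → SAFOCTL D C → SAFOCTL D C

/-- Satisfaction of SA-FO-CTL formulas at a global state. -/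
def SAFOCTL.sat {D : Schema} {C : Type} {n : ℕ} {sig : Fin (n+1) → AgentSig}
    {U : Type} {Ag : ∀ i, Agent D (sig i) U}
    (cst : C → U) (M : ACMAS D sig Ag) :
    SAFOCTL D C → GState D n U → Prop
  | .atom ψ _, s => ∀ σ, FO.sat cst (gInst s) σ ψ
  | .not φ, s => ¬ SAFOCTL.sat cst M φ s
  | .imp φ ψ, s => SAFOCTL.sat cst M φ s → SAFOCTL.sat cst M ψ s
  | .ax φ, s => ∀ r, M.IsRun r → r 0 = s → SAFOCTL.sat cst M φ (r 1)
  | .au φ ψ, s => ∀ r, M.IsRun r → r 0 = s →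
      ∃ k, SAFOCTL.sat cst M ψ (r k) ∧ ∀ j < k, SAFOCTL.sat cst M φ (r j)
  | .eu φ ψ, s => ∃ r, M.IsRun r ∧ r 0 = s ∧
      ∃ k, SAFOCTL.sat cst M ψ (r k) ∧ ∀ j < k, SAFOCTL.sat cst M φ (r j)

/-- `P ⊨ φ` for SA-FO-CTL. -/
def SAFOCTL.satM {D : Schema} {C : Type} {n : ℕ} {sig : Fin (n+1) → AgentSig}
    {U : Type} {Ag : ∀ i, Agent D (sig i) U}
    (cst : C → U) (M : ACMAS D sig Ag) (φ : SAFOCTL D C) : Prop :=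
  SAFOCTL.sat cst M φ M.s0

/-- FO-CTLK formulas, with epistemic operators for agents `1, …, n` and
common knowledge. -/
inductive FOCTLK (D : Schema) (C : Type) (n : ℕ) : Type where
  | atom : FO D C → FOCTLK D C n
  | not : FOCTLK D C n → FOCTLK D C n
  | imp : FOCTLK D C n → FOCTLK D C n → FOCTLK D C n
  | all : ℕ → FOCTLK D C n → FOCTLK D C n
  | ax : FOCTLK D C n → FOCTLK D C n
  | au : FOCTLK D C n → FOCTLK D C n → FOCTLK D C n
  | eu : FOCTLK D C n → FOCTLK D C n → FOCTLK D C n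
  | know : Fin n → FOCTLK D C n → FOCTLK D C n
  | ck : FOCTLK D C n → FOCTLK D C n

namespace FOCTLK

variable {D : Schema} {C : Type} {n : ℕ}

def free : FOCTLK D C n → Finset ℕ
  | .atom ψ => ψ.free
  | .not φ => φ.free
  | .imp φ ψ => φ.free ∪ ψ.free
  | .all x φ => φ.free.erase x
  | .ax φ => φ.free
  | .au φ ψ => φ.free ∪ ψ.free
  | .eu φ ψ => φ.free ∪ ψ.free
  | .know _ φ => φ.free
  | .ck φ => φ.free

def vars : FOCTLK D C n → Finset ℕ
  | .atom ψ => ψ.vars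
  | .not φ => φ.vars
  | .imp φ ψ => φ.vars ∪ ψ.vars
  | .all x φ => insert x φ.vars
  | .ax φ => φ.vars
  | .au φ ψ => φ.vars ∪ ψ.vars
  | .eu φ ψ => φ.vars ∪ ψ.vars
  | .know _ φ => φ.vars
  | .ck φ => φ.vars

/-- Satisfaction `(P, s, σ) ⊨ φ` of FO-CTLK formulas. -/
def sat {sig : Fin (n+1) → AgentSig} {U : Type} {Ag : ∀ i, Agent D (sig i) U}
    (cst : C → U) (M : ACMAS D sig Ag) :
    FOCTLK D C n → GState D n U → (ℕ → U) → Prop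
  | .atom ψ, s, σ => FO.sat cst (gInst s) σ ψ
  | .not φ, s, σ => ¬ sat cst M φ s σ
  | .imp φ ψ, s, σ => sat cst M φ s σ → sat cst M ψ s σ
  | .all x φ, s, σ => ∀ u ∈ adomF s, sat cst M φ s (Function.update σ x u)
  | .ax φ, s, σ => ∀ r, M.IsRun r → r 0 = s → sat cst M φ (r 1) σ
  | .au φ ψ, s, σ => ∀ r, M.IsRun r → r 0 = s →
      ∃ k, sat cst M ψ (r k) σ ∧ ∀ j < k, sat cst M φ (r j) σ
  | .eu φ ψ, s, σ => ∃ r, M.IsRun r ∧ r 0 = s ∧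
      ∃ k, sat cst M ψ (r k) σ ∧ ∀ j < k, sat cst M φ (r j) σ
  | .know i φ, s, σ => ∀ t, M.Epi i.succ s t → sat cst M φ t σ
  | .ck φ, s, σ => ∀ t, Relation.TransGen M.EpiAny s t → sat cst M φ t σ

/-- `P ⊨ φ` for FO-CTLK: satisfaction at the initial state under every
assignment. -/
def satM {sig : Fin (n+1) → AgentSig} {U : Type} {Ag : ∀ i, Agent D (sig i) U}
    (cst : C → U) (M : ACMAS D sig Ag) (φ : FOCTLK D C n) : Prop :=
  ∀ σ : ℕ → U, sat cst M φ M.s0 σ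

end FOCTLK

/-- FO-ECTLK: the existential fragment. -/
inductive FOECTLK (D : Schema) (C : Type) (n : ℕ) : Type where
  | atom : FO D C → FOECTLK D C n
  | and : FOECTLK D C n → FOECTLK D C n → FOECTLK D C n
  | or : FOECTLK D C n → FOECTLK D C n → FOECTLK D C n
  | all : ℕ → FOECTLK D C n → FOECTLK D C n
  | ex : ℕ → FOECTLK D C n → FOECTLK D C n
  | enext : FOECTLK D C n → FOECTLK D C n
  | eu : FOECTLK D C n → FOECTLK D C n → FOECTLK D C n
  | dknow : Fin n → FOECTLK D C n → FOECTLK D C n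
  | dck : FOECTLK D C n → FOECTLK D C n

/-- Satisfaction of FO-ECTLK formulas. -/
def FOECTLK.sat {D : Schema} {C : Type} {n : ℕ} {sig : Fin (n+1) → AgentSig}
    {U : Type} {Ag : ∀ i, Agent D (sig i) U}
    (cst : C → U) (M : ACMAS D sig Ag) :
    FOECTLK D C n → GState D n U → (ℕ → U) → Prop
  | .atom ψ, s, σ => FO.sat cst (gInst s) σ ψ
  | .and φ ψ, s, σ => FOECTLK.sat cst M φ s σ ∧ FOECTLK.sat cst M ψ s σ
  | .or φ ψ, s, σ => FOECTLK.sat cst M φ s σ ∨ FOECTLK.sat cst M ψ s σ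
  | .all x φ, s, σ => ∀ u ∈ adomF s, FOECTLK.sat cst M φ s (Function.update σ x u)
  | .ex x φ, s, σ => ∃ u ∈ adomF s, FOECTLK.sat cst M φ s (Function.update σ x u)
  | .enext φ, s, σ => ∃ r, M.IsRun r ∧ r 0 = s ∧ FOECTLK.sat cst M φ (r 1) σ
  | .eu φ ψ, s, σ => ∃ r, M.IsRun r ∧ r 0 = s ∧
      ∃ k, FOECTLK.sat cst M ψ (r k) σ ∧ ∀ j < k, FOECTLK.sat cst M φ (r j) σ
  | .dknow i φ, s, σ => ∃ t, M.Epi i.succ s t ∧ FOECTLK.sat cst M φ t σ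
  | .dck φ, s, σ => ∃ t, Relation.TransGen M.EpiAny s t ∧ FOECTLK.sat cst M φ t σ

/-- `P ⊨ φ` for FO-ECTLK. -/
def FOECTLK.satM {D : Schema} {C : Type} {n : ℕ} {sig : Fin (n+1) → AgentSig}
    {U : Type} {Ag : ∀ i, Agent D (sig i) U}
    (cst : C → U) (M : ACMAS D sig Ag) (φ : FOECTLK D C n) : Prop :=
  ∀ σ : ℕ → U, FOECTLK.sat cst M φ M.s0 σ

/-- `Mb` is the `b`-restriction of `M`. -/
def IsBRestriction {D : Schema} {n : ℕ} {sig : Fin (n+1) → AgentSig} {U : Type}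
    {Ag : ∀ i, Agent D (sig i) U} (Mb M : ACMAS D sig Ag) (b : ℕ) : Prop :=
  Mb.s0 = M.s0 ∧
  Mb.S = { s ∈ M.S | (adomF s).Finite ∧ (adomF s).ncard ≤ b } ∧
  ∀ s a, Mb.τ s a = { t ∈ M.τ s a | s ∈ Mb.S ∧ t ∈ Mb.S }

/-! ### Artifact-centric programs -/

/-- A declarative artifact-centric program. -/
structure ACProgram (D : Schema) (C : Type) {n : ℕ} (sig : Fin (n+1) → AgentSig) where
  /-- local database schemas, as sets of relation symbols -/
  locRel : Fin (n+1) → Set D.Rel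
  locDisj : ∀ i j, i ≠ j → Disjoint (locRel i) (locRel j)
  /-- initial local states; their values are constants -/
  l0 : ∀ _ : Fin (n+1), Inst D C
  l0_loc : ∀ i r, r ∉ locRel i → (l0 i).rel r = ∅
  /-- preconditions: FO-formulas over the local schema whose free variables
  are among the action parameters -/
  pre : ∀ i, (sig i).Act → FO D C
  /-- postconditions: FO-formulas over the global schema and its primed copy -/
  post : ∀ i, (sig i).Act → FO D.double C
  pre_free : ∀ i a, ↑(pre i a).free ⊆ { x : ℕ | x < (sig i).np a }
  post_free : ∀ i a, ↑(post i a).free ⊆ { x : ℕ | x < (sig i).np a }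
  pre_loc : ∀ i a, (pre i a).UsesOnly (locRel i)

namespace ACProgram

variable {D : Schema} {C : Type} {n : ℕ} {sig : Fin (n+1) → AgentSig}

/-- The constants mentioned in the program. -/
def progConsts (P : ACProgram D C sig) : Set C :=
  (⋃ i, (P.l0 i).adom) ∪
  ⋃ i, ⋃ a : (sig i).Act, ((P.pre i a).consts ∪ (P.post i a).consts)

/-- Ground values of the postcondition parameters of a joint ground action. -/
def postElems (P : ACProgram D C sig) {U : Type} (a : JAct sig U) : Set U :=
  { u | ∃ (i : Fin (n+1)) (j : Fin ((sig i).np (a i).1)),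
      (j : ℕ) ∈ (P.post i (a i).1).free ∧ (a i).2 j = u }

/-- The agent induced by the program for index `i`. -/
def InducedAgent {U : Type} (cst : C → U) (P : ACProgram D C sig) (i : Fin (n+1))
    (A : Agent D (sig i) U) : Prop :=
  A.L = { l : Inst D U | ∀ r, r ∉ P.locRel i → l.rel r = ∅ } ∧
  ∀ (l : Inst D U) (α : GAct (sig i) U), α ∈ A.Pr l ↔
    ∀ σ : ℕ → U, (∀ j : Fin ((sig i).np α.1), σ (j : ℕ) = α.2 j) →
      FO.sat cst l σ (P.pre i α.1)

/-- The transitions induced by the program. -/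
def InducedTrans {U : Type} (cst : C → U) (P : ACProgram D C sig)
    (s t : GState D n U) (a : JAct sig U) : Prop :=
  (∀ i, ∀ σ : ℕ → U, (∀ j : Fin ((sig i).np (a i).1), σ (j : ℕ) = (a i).2 j) →
      FO.sat cst (s i) σ (P.pre i (a i).1)) ∧
  adomF t ⊆ adomF s ∪ P.postElems a ∪ cst '' (⋃ i, (P.post i (a i).1).consts) ∧
  (∀ i, ∀ σ : ℕ → U, (∀ j : Fin ((sig i).np (a i).1), σ (j : ℕ) = (a i).2 j) →
      FO.sat cst ((gInst s).oplus (gInst t)) σ (P.post i (a i).1))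

/-- `M` is the AC-MAS induced by the program `P` (the transition relation is
assumed to be serial). -/
def InducedACMAS {U : Type} (cst : C → U) (P : ACProgram D C sig)
    (Ag : ∀ i, Agent D (sig i) U) (M : ACMAS D sig Ag) : Prop :=
  (∀ i, P.InducedAgent cst i (Ag i)) ∧
  M.s0 = (fun i => (P.l0 i).map cst) ∧
  (∀ s t a, t ∈ M.τ s a ↔ P.InducedTrans cst s t a) ∧
  M.Std

end ACProgram

/-! ### STATEMENT 16 -/

theorem statement16
    {D : Schema} {C : Type} [Fintype C] {n : ℕ}
    {sig : Fin (n+1) → AgentSig} {U : Type}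
    (cst : C → U) (hcst : Function.Injective cst)
    {Ag : ∀ i, Agent D (sig i) U}
    (M : ACMAS D sig Ag) (hM : M.Std)
    (b : ℕ) (hb : (adomF M.s0 ∪ Set.range cst).ncard ≤ b)
    (Mb : ACMAS D sig Ag) (hres : IsBRestriction Mb M b)
    (φ : FOECTLK D C n) :
    FOECTLK.satM cst Mb φ → FOECTLK.satM cst M φ := by
  obtain ⟨hs0, hS, hτ⟩ := hres
  have hSsub : Mb.S ⊆ M.S := by
    intro s hs; rw [hS] at hs; exact hs.1
  have hTr : ∀ s t, Mb.Tr s t → M.Tr s t := by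
    rintro s t ⟨a, ht⟩; rw [hτ] at ht; exact ⟨a, ht.1⟩
  have hEpi : ∀ (i : Fin (n+1)) s t, Mb.Epi i s t → M.Epi i s t := by
    rintro i s t ⟨h1, h2, h3⟩; exact ⟨hSsub h1, hSsub h2, h3⟩
  have hRun : ∀ r, Mb.IsRun r → M.IsRun r := by
    rintro r ⟨h1, h2⟩; exact ⟨fun k => hSsub (h1 k), fun k => hTr _ _ (h2 k)⟩
  have hAny : ∀ s t, Mb.EpiAny s t → M.EpiAny s t := by
    rintro s t ⟨i, h⟩; exact ⟨i, hEpi _ _ _ h⟩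
  have main : ∀ (φ : FOECTLK D C n) s σ,
      FOECTLK.sat cst Mb φ s σ → FOECTLK.sat cst M φ s σ := by
    intro φ
    induction φ with
    | atom ψ => intro s σ h; exact h
    | and φ ψ ih1 ih2 => intro s σ h; exact ⟨ih1 _ _ h.1, ih2 _ _ h.2⟩
    | or φ ψ ih1 ih2 => intro s σ h; exact h.imp (ih1 _ _) (ih2 _ _)
    | all x φ ih => intro s σ h u hu; exact ih _ _ (h u hu)
    | ex x φ ih => rintro s σ ⟨u, hu, h⟩; exact ⟨u, hu, ih _ _ h⟩
    | enext φ ih => rintro s σ ⟨r, hr, h0, h⟩; exact ⟨r, hRun r hr, h0, ih _ _ h⟩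
    | eu φ ψ ih1 ih2 =>
        rintro s σ ⟨r, hr, h0, k, hk, hj⟩
        exact ⟨r, hRun r hr, h0, k, ih2 _ _ hk, fun j hjk => ih1 _ _ (hj j hjk)⟩
    | dknow i φ ih => rintro s σ ⟨t, he, h⟩; exact ⟨t, hEpi _ _ _ he, ih _ _ h⟩
    | dck φ ih =>
        rintro s σ ⟨t, ht, h⟩
        exact ⟨t, Relation.TransGen.mono hAny _ _ ht, ih _ _ h⟩
  intro h σ
  have := main φ Mb.s0 σ (h σ)
  rwa [hs0] at this
end

section
/- Every AC-MAS P_ACP induced by an artifact-centric program ACP is uniform. -/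
/-!  Common formalisation of artifact-centric multi-agent systems (AC-MAS). -/

open Set

/-! ### Auxiliary lemmas for Statement 17 -/

section Aux17

open Set

variable {D : Schema} {U : Type}

lemma Inst.ext' {I J : Inst D U} (h : I.rel = J.rel) : I = J := by
  cases I; cases J; simp_all

lemma Inst.adom_map' {C' : Type} (f : C' → U) (I : Inst D C') :
    (I.map f).adom = f '' I.adom := by
  ext u
  constructor
  · rintro ⟨r, t, ⟨t₀, ht₀, rfl⟩, j, rfl⟩
    exact ⟨t₀ j, ⟨r, t₀, ht₀, j, rfl⟩, rfl⟩
  · rintro ⟨v, ⟨r, t₀, ht₀, j, rfl⟩, rfl⟩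
    exact ⟨r, f ∘ t₀, ⟨t₀, ht₀, rfl⟩, j, rfl⟩

lemma Inst.map_congr' {f g : U → U} (I : Inst D U) (h : ∀ u ∈ I.adom, f u = g u) :
    I.map f = I.map g := by
  apply Inst.ext'
  funext r
  apply Set.image_congr
  intro t ht
  funext j
  exact h (t j) ⟨r, t, ht, j, rfl⟩

lemma Inst.map_map' {C' : Type} (f : C' → U) (g : U → U) (I : Inst D C') :
    (I.map f).map g = I.map (g ∘ f) := by
  apply Inst.ext'
  funext r
  show (fun t => g ∘ t) '' ((fun t => f ∘ t) '' I.rel r) = (fun t => (g ∘ f) ∘ t) '' I.rel r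
  rw [Set.image_image]
  rfl

lemma Inst.adom_oplus (I J : Inst D U) :
    (I.oplus J).adom = I.adom ∪ J.adom := by
  ext u
  constructor
  · rintro ⟨r, t, ht, j, rfl⟩
    cases r with
    | inl r₀ => exact Or.inl ⟨r₀, t, ht, j, rfl⟩
    | inr r₀ => exact Or.inr ⟨r₀, t, ht, j, rfl⟩
  · rintro (⟨r₀, t, ht, j, rfl⟩ | ⟨r₀, t, ht, j, rfl⟩)
    · exact ⟨Sum.inl r₀, t, ht, j, rfl⟩
    · exact ⟨Sum.inr r₀, t, ht, j, rfl⟩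

lemma Inst.oplus_map (I J : Inst D U) (f : U → U) :
    (I.map f).oplus (J.map f) = (I.oplus J).map f := by
  apply Inst.ext'
  funext r
  cases r with
  | inl r₀ => rfl
  | inr r₀ => rfl

lemma Inst.adom_finite (I : Inst D U) : I.adom.Finite := by
  have : I.adom ⊆ ⋃ r, ⋃ t ∈ I.rel r, Set.range t := by
    rintro u ⟨r, t, ht, j, rfl⟩
    exact Set.mem_iUnion.2 ⟨r, Set.mem_biUnion ht ⟨j, rfl⟩⟩
  exact (Set.finite_iUnion fun r =>
    (I.finite r).biUnion fun t _ => Set.finite_range t).subset this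

variable {n : ℕ}

lemma adomF_finite (s : GState D n U) : (adomF s).Finite :=
  Set.finite_iUnion fun i => (s i).adom_finite

lemma adom_subset_adomF (s : GState D n U) (i : Fin (n+1)) :
    (s i).adom ⊆ adomF s :=
  Set.subset_iUnion (fun i => (s i).adom) i

lemma adomF_oplusG (s t : GState D n U) :
    adomF (oplusG s t) = adomF s ∪ adomF t := by
  unfold adomF oplusG
  simp only [Inst.adom_oplus]
  exact Set.iUnion_union_distrib _ _

lemma adom_gInst (s : GState D n U) : (gInst s).adom = adomF s := by
  ext u
  constructor
  · rintro ⟨r, t, ht, j, rfl⟩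
    obtain ⟨i, hi⟩ := Set.mem_iUnion.1 ht
    exact Set.mem_iUnion.2 ⟨i, r, t, hi, j, rfl⟩
  · rintro h
    obtain ⟨i, r, t, ht, j, rfl⟩ := Set.mem_iUnion.1 h
    exact ⟨r, t, Set.mem_iUnion.2 ⟨i, ht⟩, j, rfl⟩

lemma gInst_map (s : GState D n U) (f : U → U) :
    gInst (fun i => (s i).map f) = (gInst s).map f := by
  apply Inst.ext'
  funext r
  show ⋃ i, (fun t => f ∘ t) '' (s i).rel r = (fun t => f ∘ t) '' ⋃ i, (s i).rel r
  rw [Set.image_iUnion]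

lemma actElems_finite {sig : Fin (n+1) → AgentSig} (a : JAct sig U) :
    (actElems a).Finite := by
  have : actElems a ⊆ ⋃ i, Set.range (a i).2 := by
    rintro u ⟨i, j, rfl⟩
    exact Set.mem_iUnion.2 ⟨i, j, rfl⟩
  exact (Set.finite_iUnion fun i => Set.finite_range _).subset this

end Aux17

section Aux17b

open Set

variable {D : Schema} {U : Type} {C : Type}

lemma FO.sat_map (cst : C → U) (γ : U → U) (A : Set U)
    (hinj : Set.InjOn γ A) (I : Inst D U) (hIA : I.adom ⊆ A)
    (hC : Set.range cst ⊆ A) (hγc : ∀ c, γ (cst c) = cst c) (φ : FO D C) :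
    ∀ (σ σ' : ℕ → U), (∀ x ∈ φ.free, σ x ∈ A ∧ σ' x = γ (σ x)) →
      (FO.sat cst I σ φ ↔ FO.sat cst (I.map γ) σ' φ) := by
  induction φ with
  | eq t₁ t₂ =>
    intro σ σ' hσ
    have hval : ∀ t : Term C, t.varsF ⊆ (FO.eq (D := D) t₁ t₂).free →
        Term.val cst σ t ∈ A ∧ Term.val cst σ' t = γ (Term.val cst σ t) := by
      intro t ht
      cases t with
      | inl x =>
        have hx : x ∈ (FO.eq (D := D) t₁ t₂).free := ht (by simp [Term.varsF])
        exact hσ x hx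
      | inr c =>
        exact ⟨hC ⟨c, rfl⟩, (hγc c).symm⟩
    have h₁ := hval t₁ (by simp [FO.free])
    have h₂ := hval t₂ (by simp [FO.free])
    show Term.val cst σ t₁ = Term.val cst σ t₂ ↔
      Term.val cst σ' t₁ = Term.val cst σ' t₂
    rw [h₁.2, h₂.2]
    exact ⟨fun h => by rw [h], fun h => hinj h₁.1 h₂.1 h⟩
  | rel r ts =>
    intro σ σ' hσ
    have hA : ∀ j, Term.val cst σ (ts j) ∈ A := by
      intro j
      cases h : ts j with
      | inl x =>
        refine (hσ x ?_).1
        simp only [FO.free, Finset.mem_biUnion]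
        exact ⟨j, Finset.mem_univ j, by simp [h, Term.varsF]⟩
      | inr c => exact hC ⟨c, by simp [Term.val]⟩
    have heq : (fun j => Term.val cst σ' (ts j)) =
        γ ∘ (fun j => Term.val cst σ (ts j)) := by
      funext j
      show Term.val cst σ' (ts j) = γ (Term.val cst σ (ts j))
      cases h : ts j with
      | inl x =>
        have hx : x ∈ (FO.rel r ts).free := by
          simp only [FO.free, Finset.mem_biUnion]
          exact ⟨j, Finset.mem_univ j, by simp [h, Term.varsF]⟩
        exact (hσ x hx).2
      | inr c =>
        exact (hγc c).symm
    show (fun j => Term.val cst σ (ts j)) ∈ I.rel r ↔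
      (fun j => Term.val cst σ' (ts j)) ∈ (I.map γ).rel r
    rw [heq]
    constructor
    · intro h
      exact ⟨_, h, rfl⟩
    · rintro ⟨t₀, ht₀, hco⟩
      have : (fun j => Term.val cst σ (ts j)) = t₀ := by
        funext j
        apply hinj (hA j) (hIA ⟨r, t₀, ht₀, j, rfl⟩)
        exact (congrFun hco j).symm
      rwa [this]
  | not φ ih =>
    intro σ σ' hσ
    show ¬ _ ↔ ¬ _
    rw [ih σ σ' hσ]
  | imp φ ψ ihφ ihψ =>
    intro σ σ' hσ
    show (_ → _) ↔ (_ → _)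
    rw [ihφ σ σ' fun x hx => hσ x (Finset.mem_union_left _ hx),
        ihψ σ σ' fun x hx => hσ x (Finset.mem_union_right _ hx)]
  | all x φ ih =>
    intro σ σ' hσ
    have hadom : (I.map γ).adom = γ '' I.adom := Inst.adom_map' γ I
    show (∀ u ∈ I.adom, _) ↔ (∀ u ∈ (I.map γ).adom, _)
    constructor
    · intro h u' hu'
      rw [hadom] at hu'
      obtain ⟨u, hu, rfl⟩ := hu'
      refine (ih (Function.update σ x u) (Function.update σ' x (γ u)) ?_).1 (h u hu)
      intro y hy
      by_cases hyx : y = x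
      · subst hyx
        simp only [Function.update_self]
        exact ⟨hIA hu, trivial⟩
      · simp only [Function.update_of_ne hyx]
        exact hσ y (Finset.mem_erase.2 ⟨hyx, hy⟩)
    · intro h u hu
      have hu' : γ u ∈ (I.map γ).adom := hadom ▸ ⟨u, hu, rfl⟩
      refine (ih (Function.update σ x u) (Function.update σ' x (γ u)) ?_).2 (h (γ u) hu')
      intro y hy
      by_cases hyx : y = x
      · subst hyx
        simp only [Function.update_self]
        exact ⟨hIA hu, trivial⟩
      · simp only [Function.update_of_ne hyx]
        exact hσ y (Finset.mem_erase.2 ⟨hyx, hy⟩)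

/-- A relation-preserving map determines the target instance as an image. -/
lemma inst_eq_map (γ : U → U) (B : Set U) (I J : Inst D U)
    (hI : I.adom ⊆ B) (hJ : J.adom ⊆ γ '' B)
    (hiff : ∀ (r : D.Rel) (t : Fin (D.arity r) → U), (∀ j, t j ∈ B) →
      (t ∈ I.rel r ↔ (fun j => γ (t j)) ∈ J.rel r)) :
    J = I.map γ := by
  apply Inst.ext'
  funext r
  apply Set.Subset.antisymm
  · intro t' ht'
    have hpre : ∀ j, ∃ b ∈ B, γ b = t' j := by
      intro j
      obtain ⟨b, hb, hgb⟩ := hJ ⟨r, t', ht', j, rfl⟩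
      exact ⟨b, hb, hgb⟩
    choose b hb hgb using hpre
    have ht'b : t' = fun j => γ (b j) := by
      funext j; exact (hgb j).symm
    refine ⟨b, ?_, ?_⟩
    · exact (hiff r b hb).2 (by rw [← ht'b]; exact ht')
    · funext j; exact hgb j
  · rintro _ ⟨t₀, ht₀, rfl⟩
    exact (hiff r t₀ fun j => hI ⟨r, t₀, ht₀, j, rfl⟩).1 ht₀

/-- Injective extension of an injective map to a larger finite set. -/
lemma exists_injOn_extension (B A : Set U) (hBA : B ⊆ A) (hA : A.Finite)
    (ι : U → U) (hinj : Set.InjOn ι B) :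
    ∃ γ : U → U, (∀ b ∈ B, γ b = ι b) ∧ Set.InjOn γ A := by
  classical
  obtain hU | hU := isEmpty_or_nonempty U
  · exact ⟨ι, fun b _ => rfl, fun u hu => (IsEmpty.false u).elim⟩
  have hB : B.Finite := hA.subset hBA
  have hle : (A \ B).encard ≤ ((ι '' B)ᶜ).encard := by
    have h1 : (A \ B).encard + B.encard = A.encard :=
      Set.encard_diff_add_encard_of_subset hBA
    have h2 : (ι '' B).encard + ((ι '' B)ᶜ).encard = (Set.univ : Set U).encard :=
      Set.encard_add_encard_compl _
    have h3 : A.encard ≤ (Set.univ : Set U).encard :=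
      Set.encard_le_encard (Set.subset_univ A)
    have h4 : (ι '' B).encard = B.encard := hinj.encard_image
    rw [h4] at h2
    rw [← h1, ← h2] at h3
    rw [add_comm B.encard ((ι '' B)ᶜ).encard] at h3
    exact (WithTop.add_le_add_iff_right hB.encard_lt_top.ne).1 h3
  obtain ⟨f, hf, hfinj⟩ := (hA.diff : (A \ B).Finite).exists_injOn_of_encard_le hle
  refine ⟨fun u => if u ∈ B then ι u else f u, fun b hb => if_pos hb, ?_⟩
  intro u hu v hv huv
  simp only at huv
  by_cases hub : u ∈ B <;> by_cases hvb : v ∈ B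
  · rw [if_pos hub, if_pos hvb] at huv
    exact hinj hub hvb huv
  · rw [if_pos hub, if_neg hvb] at huv
    exact absurd (⟨u, hub, huv⟩ : f v ∈ ι '' B) (hf ⟨hv, hvb⟩)
  · rw [if_neg hub, if_pos hvb] at huv
    exact absurd (⟨v, hvb, huv.symm⟩ : f u ∈ ι '' B) (hf ⟨hu, hub⟩)
  · rw [if_neg hub, if_neg hvb] at huv
    exact hfinj ⟨hu, hub⟩ ⟨hv, hvb⟩ huv

end Aux17b

section Aux17c

open Set

variable {D : Schema} {C : Type} {n : ℕ} {sig : Fin (n+1) → AgentSig} {U : Type}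

lemma GAct.map_fst {g : AgentSig} (f : U → U) (α : GAct g U) :
    (α.map f).1 = α.1 := rfl

lemma actElems_map_mem (f : U → U) (a : JAct sig U) {u : U}
    (hu : u ∈ actElems a) : f u ∈ actElems (JAct.map f a) := by
  obtain ⟨i, j, rfl⟩ := hu
  exact ⟨i, j, rfl⟩

/-- Invariance of induced transitions under injective renamings. -/
lemma inducedTrans_map (cst : C → U) (P : ACProgram D C sig)
    (s t : GState D n U) (a : JAct sig U) (γ : U → U)
    (hinj : Set.InjOn γ (adomF (oplusG s t) ∪ Set.range cst ∪ actElems a))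
    (hγc : ∀ c, γ (cst c) = cst c)
    (h : P.InducedTrans cst s t a) :
    P.InducedTrans cst (fun i => (s i).map γ) (fun i => (t i).map γ)
      (JAct.map γ a) := by
  set A : Set U := adomF (oplusG s t) ∪ Set.range cst ∪ actElems a with hA
  have hCA : Set.range cst ⊆ A := fun u hu => Or.inl (Or.inr hu)
  have hsA : adomF s ⊆ A := by
    intro u hu
    exact Or.inl (Or.inl ((adomF_oplusG s t) ▸ Or.inl hu))
  have htA : adomF t ⊆ A := by
    intro u hu
    exact Or.inl (Or.inl ((adomF_oplusG s t) ▸ Or.inr hu))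
  have haA : actElems a ⊆ A := fun u hu => Or.inr hu
  refine ⟨?_, ?_, ?_⟩
  · -- preconditions
    intro i σ' hσ'
    set np := (sig i).np ((JAct.map γ a) i).1 with hnp
    have hnp' : np = (sig i).np (a i).1 := rfl
    set σ : ℕ → U := fun x => if hx : x < np then (a i).2 ⟨x, hx⟩ else σ' x with hσdef
    have hmatch : ∀ j : Fin ((sig i).np (a i).1), σ (j : ℕ) = (a i).2 j := by
      intro j
      have : ((j : ℕ) : ℕ) < np := j.isLt
      simp only [hσdef, dif_pos this]
    have hsat := h.1 i σ hmatch
    have hfree : ∀ x ∈ (P.pre i (a i).1).free, σ x ∈ A ∧ σ' x = γ (σ x) := by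
      intro x hx
      have hxnp : x < np := P.pre_free i (a i).1 hx
      have hσx : σ x = (a i).2 ⟨x, hxnp⟩ := dif_pos hxnp
      constructor
      · rw [hσx]; exact haA ⟨i, ⟨x, hxnp⟩, rfl⟩
      · have := hσ' ⟨x, hxnp⟩
        rw [hσx]
        exact this
    exact (FO.sat_map cst γ A hinj (s i)
      (fun u hu => hsA (adom_subset_adomF s i hu)) hCA hγc
      (P.pre i (a i).1) σ σ' hfree).1 hsat
  · -- active-domain containment
    intro u' hu'
    obtain ⟨i, hi⟩ := Set.mem_iUnion.1 hu'
    rw [Inst.adom_map'] at hi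
    obtain ⟨u, hu, rfl⟩ := hi
    have hut : u ∈ adomF t := Set.mem_iUnion.2 ⟨i, hu⟩
    rcases h.2.1 hut with (hus | hup) | huc
    · obtain ⟨i₀, hi₀⟩ := Set.mem_iUnion.1 hus
      refine Or.inl (Or.inl (Set.mem_iUnion.2 ⟨i₀, ?_⟩))
      rw [Inst.adom_map']
      exact ⟨u, hi₀, rfl⟩
    · obtain ⟨i₀, j, hjf, hju⟩ := hup
      exact Or.inl (Or.inr ⟨i₀, j, hjf, by rw [← hju]; rfl⟩)
    · obtain ⟨c, hc, hcu⟩ := huc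
      refine Or.inr ⟨c, hc, ?_⟩
      rw [← hcu, hγc]
  · -- postconditions
    intro i σ' hσ'
    set np := (sig i).np ((JAct.map γ a) i).1 with hnp
    set σ : ℕ → U := fun x => if hx : x < np then (a i).2 ⟨x, hx⟩ else σ' x with hσdef
    have hmatch : ∀ j : Fin ((sig i).np (a i).1), σ (j : ℕ) = (a i).2 j := by
      intro j
      have : ((j : ℕ) : ℕ) < np := j.isLt
      simp only [hσdef, dif_pos this]
    have hsat := h.2.2 i σ hmatch
    have hfree : ∀ x ∈ (P.post i (a i).1).free, σ x ∈ A ∧ σ' x = γ (σ x) := by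
      intro x hx
      have hxnp : x < np := P.post_free i (a i).1 hx
      have hσx : σ x = (a i).2 ⟨x, hxnp⟩ := dif_pos hxnp
      constructor
      · rw [hσx]; exact haA ⟨i, ⟨x, hxnp⟩, rfl⟩
      · have := hσ' ⟨x, hxnp⟩
        rw [hσx]
        exact this
    have hJ : (gInst fun i => (s i).map γ).oplus (gInst fun i => (t i).map γ) =
        ((gInst s).oplus (gInst t)).map γ := by
      rw [gInst_map, gInst_map, Inst.oplus_map]
    have hIA : ((gInst s).oplus (gInst t)).adom ⊆ A := by
      rw [Inst.adom_oplus, adom_gInst, adom_gInst]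
      exact Set.union_subset hsA htA
    have := (FO.sat_map cst γ A hinj ((gInst s).oplus (gInst t)) hIA hCA hγc
      (P.post i (a i).1) σ σ' hfree).1 hsat
    rw [← hJ] at this
    exact this

end Aux17c

section Aux17d

open Set

variable {D : Schema} {C : Type} {n : ℕ} {sig : Fin (n+1) → AgentSig} {U : Type}

lemma witness_components (cst : C → U) (ι : U → U) (s t s' t' : GState D n U)
    (hw : IsWitness cst cst ι (oplusG s t) (oplusG s' t')) :
    (∀ i, s' i = (s i).map ι) ∧ (∀ i, t' i = (t i).map ι) := by
  have hsur : adomF (oplusG s' t') ∪ Set.range cst ⊆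
      ι '' (adomF (oplusG s t) ∪ Set.range cst) := hw.1.2.2
  constructor
  · intro i
    apply inst_eq_map ι (adomF (oplusG s t) ∪ Set.range cst)
    · intro u hu
      have h1 : u ∈ ((s i).oplus (t i)).adom :=
        (Inst.adom_oplus (s i) (t i)).symm ▸ Or.inl hu
      exact Or.inl (adom_subset_adomF (oplusG s t) i h1)
    · intro u hu
      have h1 : u ∈ ((s' i).oplus (t' i)).adom :=
        (Inst.adom_oplus (s' i) (t' i)).symm ▸ Or.inl hu
      exact hsur (Or.inl (adom_subset_adomF (oplusG s' t') i h1))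
    · intro r tup htup
      exact hw.2.2 i (Sum.inl r) tup htup
  · intro i
    apply inst_eq_map ι (adomF (oplusG s t) ∪ Set.range cst)
    · intro u hu
      have h1 : u ∈ ((s i).oplus (t i)).adom :=
        (Inst.adom_oplus (s i) (t i)).symm ▸ Or.inr hu
      exact Or.inl (adom_subset_adomF (oplusG s t) i h1)
    · intro u hu
      have h1 : u ∈ ((s' i).oplus (t' i)).adom :=
        (Inst.adom_oplus (s' i) (t' i)).symm ▸ Or.inr hu
      exact hsur (Or.inl (adom_subset_adomF (oplusG s' t') i h1))
    · intro r tup htup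
      exact hw.2.2 i (Sum.inr r) tup htup

/-- Reachability in an induced AC-MAS is closed under injective renamings. -/
lemma reach_closed [Fintype C] (cst : C → U) (P : ACProgram D C sig)
    {Ag : ∀ i, Agent D (sig i) U} (M : ACMAS D sig Ag)
    (hind : P.InducedACMAS cst Ag M) :
    ∀ t : GState D n U, Relation.ReflTransGen M.Tr M.s0 t →
      ∀ (ι : U → U) (t' : GState D n U),
        Set.InjOn ι (adomF t ∪ Set.range cst) →
        (∀ c, ι (cst c) = cst c) →
        (∀ i, t' i = (t i).map ι) →
        Relation.ReflTransGen M.Tr M.s0 t' := by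
  intro t h
  induction h with
  | refl =>
    intro ι t' hinj hc ht'
    have ht's0 : t' = M.s0 := by
      funext i
      rw [ht' i, hind.2.1]
      show ((P.l0 i).map cst).map ι = (P.l0 i).map cst
      rw [Inst.map_map']
      have : ι ∘ cst = cst := funext hc
      rw [this]
    rw [ht's0]
  | @tail b c hab hbc ih =>
    intro ι t' hinj hc ht'
    obtain ⟨a, hta⟩ := hbc
    have htrans := (hind.2.2.1 b c a).mp hta
    set B : Set U := adomF c ∪ Set.range cst with hBdef
    set A : Set U := adomF (oplusG b c) ∪ Set.range cst ∪ actElems a with hAdef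
    have hBA : B ⊆ A := by
      intro u hu
      rcases hu with hu | hu
      · exact Or.inl (Or.inl ((adomF_oplusG b c).symm ▸ Or.inr hu))
      · exact Or.inl (Or.inr hu)
    have hAfin : A.Finite :=
      (((adomF_finite _).union (Set.finite_range cst)).union (actElems_finite a))
    obtain ⟨γ, hγB, hγinj⟩ := exists_injOn_extension B A hBA hAfin ι hinj
    have hγc : ∀ c', γ (cst c') = cst c' := fun c' => by
      rw [hγB _ (Or.inr ⟨c', rfl⟩), hc]
    have hreach' : Relation.ReflTransGen M.Tr M.s0 (fun i => (b i).map γ) := by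
      apply ih γ _ (hγinj.mono ?_) hγc (fun i => rfl)
      intro u hu
      rcases hu with hu | hu
      · exact Or.inl (Or.inl ((adomF_oplusG b c).symm ▸ Or.inl hu))
      · exact Or.inl (Or.inr hu)
    have ht'γ : ∀ i, t' i = (c i).map γ := by
      intro i
      rw [ht' i]
      exact Inst.map_congr' (c i) fun u hu =>
        (hγB u (Or.inl (adom_subset_adomF c i hu))).symm
    have hT := inducedTrans_map cst P b c a γ hγinj hγc htrans
    refine Relation.ReflTransGen.tail hreach' ⟨JAct.map γ a, ?_⟩
    rw [hind.2.2.1, funext ht'γ]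
    exact hT

end Aux17d

/-! ### STATEMENT 17 -/

theorem statement17
    {D : Schema} {C : Type} [Fintype C] {n : ℕ}
    {sig : Fin (n+1) → AgentSig} {U : Type}
    (cst : C → U) (hcst : Function.Injective cst)
    (P : ACProgram D C sig)
    {Ag : ∀ i, Agent D (sig i) U} (M : ACMAS D sig Ag)
    (hind : P.InducedACMAS cst Ag M) :
    Uniform cst M := by
  constructor
  · -- UniformT
    intro s _hs t _ht s' _hs' t' a hta ι hw ι' hagree hinj' hc'
    have htrans := (hind.2.2.1 s t a).mp hta
    obtain ⟨hs'c, ht'c⟩ := witness_components cst ι s t s' t' hw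
    have hs'2 : ∀ i, s' i = (s i).map ι' := by
      intro i
      rw [hs'c i]
      exact Inst.map_congr' (s i) fun u hu => by
        have h1 : u ∈ ((s i).oplus (t i)).adom :=
          (Inst.adom_oplus (s i) (t i)).symm ▸ Or.inl hu
        exact (hagree u (Or.inl (adom_subset_adomF (oplusG s t) i h1))).symm
    have ht'2 : ∀ i, t' i = (t i).map ι' := by
      intro i
      rw [ht'c i]
      exact Inst.map_congr' (t i) fun u hu => by
        have h1 : u ∈ ((s i).oplus (t i)).adom :=
          (Inst.adom_oplus (s i) (t i)).symm ▸ Or.inr hu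
        exact (hagree u (Or.inl (adom_subset_adomF (oplusG s t) i h1))).symm
    have hT := inducedTrans_map cst P s t a ι' hinj' hc' htrans
    rw [hind.2.2.1, funext hs'2, funext ht'2]
    exact hT
  · -- UniformE
    intro s _hs t ht s' hs' t' i hepi hiso
    obtain ⟨ι, hw⟩ := hiso
    obtain ⟨hs'c, ht'c⟩ := witness_components cst ι s t s' t' hw
    have hstd := hind.2.2.2.2
    refine ⟨hs', ?_, ?_⟩
    · -- t' ∈ M.S
      have hreach : Relation.ReflTransGen M.Tr M.s0 t := by
        have := ht
        rw [hstd] at this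
        exact this
      have hinjB : Set.InjOn ι (adomF t ∪ Set.range cst) := by
        apply hw.1.2.1.mono
        intro u hu
        rcases hu with hu | hu
        · exact Or.inl ((adomF_oplusG s t).symm ▸ Or.inr hu)
        · exact Or.inr hu
      have hreach' := reach_closed cst P M hind t hreach ι t' hinjB hw.2.1 ht'c
      rw [hstd]
      exact hreach'
    · -- s' i.succ = t' i.succ
      rw [hs'c i.succ, ht'c i.succ, hepi.2.2]
end
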